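/- Let n ≥ 2 be an integer, L, T > 0, λ₁,…,λ_n > 0 with λ_n > 1, and 0 ≤ N < 2^{−n}·L·T^n·(λ_n − 1). Define Ω = {x ∈ ℝⁿ : 2^{n−i+1}·T^{i−1}·|x_i| ≤ L·T^n·(λ_n − 1) for i = 1,…,n}. Consider the error dynamics x_{i,k+1} = x_{i,k} − T·L^{i/n}·λ_i·⌈x_{1,k+1} − η_k⌋^{(n−i)/n} + T·x_{i+1,k+1} for i = 1,…,n−1 and x_{n,k+1} ∈ x_{n,k} − T·L·λ_n·⌈x_{1,k+1} − η_k⌋⁰ − T·δ_k, with |η_k| ≤ N and |δ_k| ≤ L. Then x_K ∈ Ω implies x_{K+1} ∈ Ω and x_{1,K+1} = η_K. -/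

import Mathlib

/-- Signed power: `⌈y⌋^p = |y|^p * sign y`. -/
noncomputable def spow (p : ℝ) (y : ℝ) : ℝ := |y| ^ p * Real.sign y

/-- Set-valued sign function `⌈y⌋⁰`. -/
noncomputable def signSet (y : ℝ) : Set ℝ :=
  if y = 0 then Set.Icc (-1) 1 else {Real.sign y}

lemma spow_zero' (p : ℝ) : spow p 0 = 0 := by
  simp [spow]

lemma geom (n : ℕ) : ∀ i, 1 ≤ i → i ≤ n + 1 →
    ∑ j ∈ Finset.Ico 1 i, (((2:ℝ))^(n - j + 1))⁻¹ = ((2:ℝ)^n)⁻¹ * (2^(i-1) - 1) := by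
  intro i hi
  induction i, hi using Nat.le_induction with
  | base => intro _; simp
  | succ i hi ih =>
    intro h
    rw [Finset.sum_Ico_succ_top hi, ih (by omega)]
    have h2 : i + 1 - 1 = (i - 1) + 1 := by omega
    rw [h2]
    have h1 : n - i + 1 + (i - 1) = n := by omega
    generalize hb : i - 1 = b at *
    generalize ha : n - i + 1 = a at *
    subst h1
    rw [pow_add, pow_succ]
    have p1 : (0:ℝ) < (2:ℝ)^a := by positivity
    have p2 : (0:ℝ) < (2:ℝ)^b := by positivity
    field_simp
    ring

theorem stmt17 (n : ℕ) (hn : 2 ≤ n) (L T N : ℝ) (hL : 0 < L) (hT : 0 < T)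
    (lam : ℕ → ℝ) (hlam : ∀ i, 1 ≤ i → i ≤ n → 0 < lam i) (hlamn : 1 < lam n)
    (hN : 0 ≤ N) (hNsmall : N < 2 ^ (-(n : ℝ)) * L * T ^ n * (lam n - 1))
    (x : ℕ → ℕ → ℝ) (η δ : ℕ → ℝ)
    (hη : ∀ k, |η k| ≤ N) (hδ : ∀ k, |δ k| ≤ L)
    (hdyn : ∀ i, 1 ≤ i → i ≤ n - 1 → ∀ k,
      x i (k + 1) = x i k
        - T * L ^ ((i : ℝ) / n) * lam i *
            spow (((n : ℝ) - i) / n) (x 1 (k + 1) - η k)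
        + T * x (i + 1) (k + 1))
    (hdynn : ∀ k, ∃ s ∈ signSet (x 1 (k + 1) - η k),
      x n (k + 1) = x n k - T * L * lam n * s - T * δ k) :
    ∀ K : ℕ,
      (∀ i, 1 ≤ i → i ≤ n → 2 ^ (n - i + 1) * T ^ (i - 1) * |x i K| ≤ L * T ^ n * (lam n - 1)) →
      (∀ i, 1 ≤ i → i ≤ n →
        2 ^ (n - i + 1) * T ^ (i - 1) * |x i (K + 1)| ≤ L * T ^ n * (lam n - 1)) ∧
      x 1 (K + 1) = η K := by
  intro K hΩ
  set M : ℝ := L * T ^ n * (lam n - 1) with hMdef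
  have hM : 0 < M := by
    have : 0 < lam n - 1 := by linarith
    positivity
  set v : ℝ := x 1 (K + 1) - η K with hvdef
  -- rewrite the smallness hypothesis
  have h2n : (2:ℝ) ^ (-(n : ℝ)) = ((2:ℝ)^n)⁻¹ := by
    rw [Real.rpow_neg (by norm_num), Real.rpow_natCast]
  have hNM : N < M * ((2:ℝ)^n)⁻¹ := by
    rw [h2n] at hNsmall
    calc N < ((2:ℝ)^n)⁻¹ * L * T ^ n * (lam n - 1) := hNsmall
      _ = M * ((2:ℝ)^n)⁻¹ := by rw [hMdef]; ring
  -- per-coordinate bound from Ω-membership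
  have hxb : ∀ j, 1 ≤ j → j ≤ n → T^(j-1) * |x j K| ≤ M * (((2:ℝ))^(n - j + 1))⁻¹ := by
    intro j hj1 hjn
    have h2p : (0:ℝ) < (2:ℝ)^(n - j + 1) := by positivity
    have h := hΩ j hj1 hjn
    have h2 := mul_le_mul_of_nonneg_left h (inv_nonneg.mpr h2p.le)
    have h3 : ((2:ℝ)^(n - j + 1))⁻¹ * (2^(n - j + 1) * T^(j-1) * |x j K|)
        = T^(j-1) * |x j K| := by
      field_simp
      try ring
    linarith [h2, h3]
  -- bound on partial sums
  have hsum : ∀ i, 1 ≤ i → i ≤ n + 1 →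
      |∑ j ∈ Finset.Ico 1 i, T^(j-1) * x j K| ≤ M * (((2:ℝ)^n)⁻¹ * (2^(i-1) - 1)) := by
    intro i hi1 hin
    calc |∑ j ∈ Finset.Ico 1 i, T^(j-1) * x j K|
        ≤ ∑ j ∈ Finset.Ico 1 i, |T^(j-1) * x j K| := Finset.abs_sum_le_sum_abs _ _
      _ ≤ ∑ j ∈ Finset.Ico 1 i, M * (((2:ℝ))^(n - j + 1))⁻¹ := by
          apply Finset.sum_le_sum
          intro j hj
          rw [Finset.mem_Ico] at hj
          rw [abs_mul, abs_pow, abs_of_pos hT]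
          exact hxb j hj.1 (by omega)
      _ = M * (((2:ℝ)^n)⁻¹ * (2^(i-1) - 1)) := by
          rw [← Finset.mul_sum, geom n i hi1 hin]
  -- telescoping identity
  set g : ℕ → ℝ := fun j => T^(j-1) * x j K
    - T^j * L ^ ((j : ℝ) / n) * lam j * spow (((n : ℝ) - j) / n) v with hgdef
  have tele : ∀ i, 1 ≤ i → i ≤ n →
      x 1 (K + 1) = (∑ j ∈ Finset.Ico 1 i, g j) + T^(i-1) * x i (K + 1) := by
    intro i hi1
    induction i, hi1 using Nat.le_induction with
    | base => intro _; simp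
    | succ i hi ih =>
      intro h
      rw [Finset.sum_Ico_succ_top hi]
      have hd := hdyn i hi (by omega) K
      rw [← hvdef] at hd
      have hp : T^(i-1) * T = T^i := by
        rw [← pow_succ]; congr 1; omega
      have h2 : i + 1 - 1 = i := by omega
      rw [h2, ih (by omega), hd, hgdef]
      simp only
      rw [← hp]
      ring
  -- value of x 1 (K+1) via x n
  obtain ⟨s, hs, hxn⟩ := hdynn K
  rw [← hvdef] at hs
  have hpn : T^(n-1) * T = T^n := by
    rw [← pow_succ]; congr 1; omega
  have key : x 1 (K + 1) = (∑ j ∈ Finset.Ico 1 n, g j) + T^(n-1) * x n K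
      - T^n * L * lam n * s - T^n * δ K := by
    rw [tele n (by omega) le_rfl, hxn, ← hpn]
    ring
  -- show v = 0
  have hSn : |∑ j ∈ Finset.Ico 1 n, T^(j-1) * x j K| ≤ M * (((2:ℝ)^n)⁻¹ * (2^(n-1) - 1)) :=
    hsum n (by omega) (by omega)
  have hxnK : T^(n-1) * |x n K| ≤ M * (((2:ℝ))^(n - n + 1))⁻¹ := hxb n (by omega) le_rfl
  have hxnK' : T^(n-1) * |x n K| ≤ M / 2 := by
    have : n - n + 1 = 1 := by omega
    rw [this] at hxnK
    simpa [div_eq_mul_inv] using hxnK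
  have hPQ : ((2:ℝ)^n)⁻¹ * ((2:ℝ)^(n-1) - 1) = 1/2 - ((2:ℝ)^n)⁻¹ := by
    have h1 : (2:ℝ)^n = 2 * 2^(n-1) := by
      rw [← pow_succ']; congr 1; omega
    have p2 : (0:ℝ) < (2:ℝ)^(n-1) := by positivity
    rw [h1]
    field_simp
    try ring
  have hv0 : v = 0 := by
    by_contra hvne
    have hsv : s = Real.sign v := by
      rw [signSet, if_neg hvne] at hs
      exact hs
    rcases lt_or_gt_of_ne hvne with hneg | hpos
    · -- v < 0 : s = -1, spow terms ≤ 0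
      have hsgn : Real.sign v = -1 := Real.sign_of_neg hneg
      have hGe : ∀ j ∈ Finset.Ico 1 n, T^(j-1) * x j K ≤ g j := by
        intro j hj
        rw [Finset.mem_Ico] at hj
        have hspow : spow (((n : ℝ) - j) / n) v ≤ 0 := by
          rw [spow, hsgn]
          have : (0:ℝ) ≤ |v| ^ (((n : ℝ) - j) / n) := Real.rpow_nonneg (abs_nonneg v) _
          nlinarith
        have hc : 0 < T^j * L ^ ((j : ℝ) / n) * lam j := by
          have h1 : (0:ℝ) < T^j := by positivity
          have h2 : (0:ℝ) < L ^ ((j : ℝ) / n) := Real.rpow_pos_of_pos hL _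
          have h3 : 0 < lam j := hlam j hj.1 (by omega)
          positivity
        rw [hgdef]
        simp only
        have h4 := mul_nonpos_of_nonneg_of_nonpos hc.le hspow
        linarith [h4]
      have hSge : ∑ j ∈ Finset.Ico 1 n, T^(j-1) * x j K ≤ ∑ j ∈ Finset.Ico 1 n, g j :=
        Finset.sum_le_sum hGe
      have habs := abs_le.mp hSn
      have habsd := abs_le.mp (hδ K)
      have habse := abs_le.mp (hη K)
      have hTn : (0:ℝ) < T^n := by positivity
      have hdK1 := mul_le_mul_of_nonneg_left habsd.1 hTn.le
      have hdK2 := mul_le_mul_of_nonneg_left habsd.2 hTn.le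
      have hMeq : T^n * L * lam n - T^n * L = M := by rw [hMdef]; ring
      have hvexpr : v = (∑ j ∈ Finset.Ico 1 n, g j) + T^(n-1) * x n K
          - T^n * L * lam n * s - T^n * δ K - η K := by
        rw [hvdef, key]
      have hxnKlow : -(M/2) ≤ T^(n-1) * x n K := by
        have : |T^(n-1) * x n K| ≤ M / 2 := by
          rw [abs_mul, abs_pow, abs_of_pos hT]; exact hxnK'
        linarith [(abs_le.mp this).1]
      have : 0 < v := by
        rw [hvexpr, hsv, hsgn]
        have e1 : M * (((2:ℝ)^n)⁻¹ * (2^(n-1) - 1)) = M/2 - M * ((2:ℝ)^n)⁻¹ := by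
          rw [hPQ]; ring
        rw [e1] at habs
        linarith [hSge, habs.1, hxnKlow, hdK1, hdK2, habse.1, habse.2, hNM, hMeq]
      linarith
    · -- v > 0 : s = 1, spow terms ≥ 0
      have hsgn : Real.sign v = 1 := Real.sign_of_pos hpos
      have hGe : ∀ j ∈ Finset.Ico 1 n, g j ≤ T^(j-1) * x j K := by
        intro j hj
        rw [Finset.mem_Ico] at hj
        have hspow : 0 ≤ spow (((n : ℝ) - j) / n) v := by
          rw [spow, hsgn]
          have : (0:ℝ) ≤ |v| ^ (((n : ℝ) - j) / n) := Real.rpow_nonneg (abs_nonneg v) _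
          nlinarith
        have hc : 0 < T^j * L ^ ((j : ℝ) / n) * lam j := by
          have h1 : (0:ℝ) < T^j := by positivity
          have h2 : (0:ℝ) < L ^ ((j : ℝ) / n) := Real.rpow_pos_of_pos hL _
          have h3 : 0 < lam j := hlam j hj.1 (by omega)
          positivity
        rw [hgdef]
        simp only
        have h4 := mul_nonneg hc.le hspow
        linarith [h4]
      have hSge : ∑ j ∈ Finset.Ico 1 n, g j ≤ ∑ j ∈ Finset.Ico 1 n, T^(j-1) * x j K :=
        Finset.sum_le_sum hGe
      have habs := abs_le.mp hSn
      have habsd := abs_le.mp (hδ K)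
      have habse := abs_le.mp (hη K)
      have hTn : (0:ℝ) < T^n := by positivity
      have hdK1 := mul_le_mul_of_nonneg_left habsd.1 hTn.le
      have hdK2 := mul_le_mul_of_nonneg_left habsd.2 hTn.le
      have hMeq : T^n * L * lam n - T^n * L = M := by rw [hMdef]; ring
      have hvexpr : v = (∑ j ∈ Finset.Ico 1 n, g j) + T^(n-1) * x n K
          - T^n * L * lam n * s - T^n * δ K - η K := by
        rw [hvdef, key]
      have hxnKhigh : T^(n-1) * x n K ≤ M/2 := by
        have : |T^(n-1) * x n K| ≤ M / 2 := by
          rw [abs_mul, abs_pow, abs_of_pos hT]; exact hxnK'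
        linarith [(abs_le.mp this).2]
      have : v < 0 := by
        rw [hvexpr, hsv, hsgn]
        have e1 : M * (((2:ℝ)^n)⁻¹ * (2^(n-1) - 1)) = M/2 - M * ((2:ℝ)^n)⁻¹ := by
          rw [hPQ]; ring
        rw [e1] at habs
        linarith [hSge, habs.2, hxnKhigh, hdK1, hdK2, habse.1, habse.2, hNM, hMeq]
      linarith
  -- from v = 0 : x 1 (K+1) = η K
  have hx1 : x 1 (K + 1) = η K := by
    have := hvdef
    rw [hv0] at this
    linarith [this]
  refine ⟨?_, hx1⟩
  -- second telescoping with spow = 0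
  have tele2 : ∀ i, 1 ≤ i → i ≤ n →
      T^(i-1) * x i (K + 1) = η K - ∑ j ∈ Finset.Ico 1 i, T^(j-1) * x j K := by
    intro i hi1
    induction i, hi1 using Nat.le_induction with
    | base => intro _; simp [hx1]
    | succ i hi ih =>
      intro h
      have hd := hdyn i hi (by omega) K
      rw [← hvdef, hv0, spow_zero'] at hd
      have hp : T^(i-1) * T = T^i := by
        rw [← pow_succ]; congr 1; omega
      have h2 : i + 1 - 1 = i := by omega
      rw [h2, Finset.sum_Ico_succ_top hi]
      have ih' := ih (by omega)
      have : T^(i-1) * x i (K+1) = T^(i-1) * x i K + T^i * x (i+1) (K+1) := by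
        rw [hd, ← hp]; ring
      linarith [ih']
  -- final bounds
  intro i hi1 hin
  have ht2 := tele2 i hi1 hin
  have hsum' := hsum i hi1 (by omega)
  have hb : T^(i-1) * |x i (K + 1)| ≤ N + M * (((2:ℝ)^n)⁻¹ * (2^(i-1) - 1)) := by
    have e : T^(i-1) * |x i (K + 1)| = |T^(i-1) * x i (K + 1)| := by
      rw [abs_mul, abs_pow, abs_of_pos hT]
    rw [e, ht2]
    calc |η K - ∑ j ∈ Finset.Ico 1 i, T^(j-1) * x j K|
        ≤ |η K| + |∑ j ∈ Finset.Ico 1 i, T^(j-1) * x j K| := abs_sub _ _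
      _ ≤ N + M * (((2:ℝ)^n)⁻¹ * (2^(i-1) - 1)) := add_le_add (hη K) hsum'
  have hc : (2:ℝ)^(n-i+1) * (2:ℝ)^(i-1) = 2^n := by
    rw [← pow_add]; congr 1; omega
  have hcp : (0:ℝ) < (2:ℝ)^(n-i+1) := by positivity
  have hcn : (0:ℝ) < (2:ℝ)^n := by positivity
  calc (2:ℝ)^(n-i+1) * T^(i-1) * |x i (K+1)|
      = (2:ℝ)^(n-i+1) * (T^(i-1) * |x i (K+1)|) := by ring
    _ ≤ (2:ℝ)^(n-i+1) * (N + M * (((2:ℝ)^n)⁻¹ * (2^(i-1) - 1))) := by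
        exact mul_le_mul_of_nonneg_left hb (le_of_lt hcp)
    _ ≤ (2:ℝ)^(n-i+1) * (M * ((2:ℝ)^n)⁻¹ + M * (((2:ℝ)^n)⁻¹ * (2^(i-1) - 1))) := by
        apply mul_le_mul_of_nonneg_left _ (le_of_lt hcp)
        linarith [hNM]
    _ = M * (((2:ℝ)^(n-i+1) * (2:ℝ)^(i-1)) * ((2:ℝ)^n)⁻¹) := by ring
    _ = M := by rw [hc, mul_inv_cancel₀ (ne_of_gt hcn), mul_one]
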